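/- Let A be a symmetric positive definite 2×2 matrix with det A = K, trace A = H, and let à be another symmetric positive definite 2×2 matrix with det à = K. Then det(A - Ã) ≤ 0. -/

import Mathlib

/-- Two symmetric positive definite 2×2 matrices `A` (with `det A = K`,
`trace A = H`) and `A'` (with `det A' = K`) satisfy `det(A - A') ≤ 0`. -/
theorem det_sub_nonpos_of_posDef_eq_det
    (A A' : Matrix (Fin 2) (Fin 2) ℝ) (hA : A.PosDef) (hA' : A'.PosDef)
    (K H : ℝ) (hdetA : A.det = K) (htrA : A.trace = H) (hdetA' : A'.det = K) :
    (A - A').det ≤ 0 := by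
  have hKpos : 0 < K := hdetA ▸ hA.det_pos
  have hsym : A 1 0 = A 0 1 := by
    have := hA.1
    rw [Matrix.IsHermitian] at this
    have := congrFun (congrFun this 1) 0
    simpa [Matrix.conjTranspose_apply] using this.symm
  have hsym' : A' 1 0 = A' 0 1 := by
    have := hA'.1
    rw [Matrix.IsHermitian] at this
    have := congrFun (congrFun this 1) 0
    simpa [Matrix.conjTranspose_apply] using this.symm
  have ha : 0 < A 0 0 := by
    have h := hA.dotProduct_mulVec_pos (x := ![1, 0]) (by simp [funext_iff, Fin.forall_fin_two])
    simpa [dotProduct, Matrix.mulVec, Fin.sum_univ_two] using h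
  have hd : 0 < A 1 1 := by
    have h := hA.dotProduct_mulVec_pos (x := ![0, 1]) (by simp [funext_iff, Fin.forall_fin_two])
    simpa [dotProduct, Matrix.mulVec, Fin.sum_univ_two] using h
  have ha' : 0 < A' 0 0 := by
    have h := hA'.dotProduct_mulVec_pos (x := ![1, 0]) (by simp [funext_iff, Fin.forall_fin_two])
    simpa [dotProduct, Matrix.mulVec, Fin.sum_univ_two] using h
  have hd' : 0 < A' 1 1 := by
    have h := hA'.dotProduct_mulVec_pos (x := ![0, 1]) (by simp [funext_iff, Fin.forall_fin_two])
    simpa [dotProduct, Matrix.mulVec, Fin.sum_univ_two] using h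
  rw [Matrix.det_fin_two] at hdetA hdetA' ⊢
  rw [hsym] at hdetA
  rw [hsym'] at hdetA'
  set a := A 0 0; set b := A 0 1; set d := A 1 1
  set a' := A' 0 0; set b' := A' 0 1; set d' := A' 1 1
  simp only [Matrix.sub_apply, hsym, hsym']
  nlinarith [sq_nonneg (a*d' - a'*d), mul_nonneg hKpos.le (sq_nonneg (b - b')),
    mul_pos ha hd', mul_pos ha' hd]
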